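/- Multiplying the six three-leg factors of the master system centered at x_k yields the general discrete relativistic Toda type equation: if P_N = ((X̃+βX)/(γX̃+δX))·((δX+λΨ̃)/(βλX+Ψ̃))·((λX-γΦ̃₊)/(X-λΦ̃₊)) = 1 and analogously the five other three-leg equations (E), (SE), (S), (W), (NW) hold (with X = e^{x_k} etc.), then ((e^{x̃_k-x_k}+β)/(γe^{x̃_k-x_k}+δ))·((γe^{x_k-x̲_k}+δ)/(e^{x_k-x̲_k}+β))·((γe^{x_{k+1}-x_k}+η)/(e^{x_{k+1}-x_k}+ε))·((e^{x_k-x_{k-1}}+ε)/(γe^{x_k-x_{k-1}}+η))·((βe^{x̲_{k+1}-x_k}-ε)/(δe^{x̲_{k+1}-x_k}-η))·((δe^{x_k-x̃_{k-1}}-η)/(βe^{x_k-x̃_{k-1}}-ε)) = 1, since the auxiliary variables Ψ_k, Ψ_{k+1}, Ψ̃_k, Φ_{k+1}, Φ̃_k, Φ̃_{k+1} cancel telescopically. -/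
import Mathlib


private lemma telescope6 {a1 b1 c1 a2 b2 c2 a3 b3 c3 a4 b4 c4 a5 b5 c5 a6 b6 c6 : ℂ}
    (h1 : a1 * b1 * c1 = 1) (h2 : a2 * b2 * c2 = 1) (h3 : a3 * b3 * c3 = 1)
    (h4 : a4 * b4 * c4 = 1) (h5 : a5 * b5 * c5 = 1) (h6 : a6 * b6 * c6 = 1)
    (p1 : b1 * c6 = 1) (p2 : c1 * b2 = 1) (p3 : c2 * b3 = 1)
    (p4 : c3 * b4 = 1) (p5 : c4 * b5 = 1) (p6 : c5 * b6 = 1) :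
    a1 * a2 * a3 * a4 * a5 * a6 = 1 := by
  have H : (a1 * b1 * c1) * (a2 * b2 * c2) * (a3 * b3 * c3) * (a4 * b4 * c4) *
      (a5 * b5 * c5) * (a6 * b6 * c6) = 1 := by
    rw [h1, h2, h3, h4, h5, h6]; norm_num
  calc a1 * a2 * a3 * a4 * a5 * a6
      = a1 * a2 * a3 * a4 * a5 * a6 *
        ((b1 * c6) * (c1 * b2) * (c2 * b3) * (c3 * b4) * (c4 * b5) * (c5 * b6)) := by
        rw [p1, p2, p3, p4, p5, p6]; ring
    _ = (a1 * b1 * c1) * (a2 * b2 * c2) * (a3 * b3 * c3) * (a4 * b4 * c4) *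
        (a5 * b5 * c5) * (a6 * b6 * c6) := by ring
    _ = 1 := H

/-- Multiplying the six three-leg forms (N), (E), (SE), (S), (W), (NW) of the
master system centered at `x_k` yields the general discrete relativistic Toda
type equation; the auxiliary variables cancel telescopically.
Here `X = e^{x_k}`, `Xt = e^{x̃_k}`, `Xd = e^{x̲_k}`, `Xp = e^{x_{k+1}}`,
`Xm = e^{x_{k-1}}`, `Xu = e^{x̲_{k+1}}`, `Xv = e^{x̃_{k-1}}`, and
`Psik, Psik1, Psitk, Phik1, Phitk, Phitk1` are the auxiliary (white-vertex)
variables. -/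
theorem master_three_leg_product
    (β γ δ ε η lam : ℂ)
    (X Xt Xd Xp Xm Xu Xv Psik Psik1 Psitk Phik1 Phitk Phitk1 : ℂ)
    (hX : X ≠ 0) (hXd : Xd ≠ 0) (hXm : Xm ≠ 0) (hXv : Xv ≠ 0)
    -- nonvanishing of all denominators appearing in the six three-leg forms
    (d1 : γ * Xt + δ * X ≠ 0) (d2 : β * lam * X + Psitk ≠ 0)
    (d3 : X - lam * Phitk1 ≠ 0) (d4 : Xp + ε * X ≠ 0)
    (d5 : lam * X - γ * Phitk1 ≠ 0) (d6 : η * X + lam * Psik1 ≠ 0)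
    (d7 : δ * Xu - η * X ≠ 0) (d8 : ε * lam * X + Psik1 ≠ 0)
    (d9 : X + β * lam * Phik1 ≠ 0) (d10 : X + β * Xd ≠ 0)
    (d11 : lam * X + δ * Phik1 ≠ 0) (d12 : γ * X - lam * Psik ≠ 0)
    (d13 : γ * X + η * Xm ≠ 0) (d14 : lam * X - Psik ≠ 0)
    (d15 : X + ε * lam * Phitk ≠ 0) (d16 : β * X - ε * Xv ≠ 0)
    (d17 : lam * X + η * Phitk ≠ 0) (d18 : δ * X + lam * Psitk ≠ 0)
    -- the six three-leg equations
    (hN : ((Xt + β * X) / (γ * Xt + δ * X)) *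
          ((δ * X + lam * Psitk) / (β * lam * X + Psitk)) *
          ((lam * X - γ * Phitk1) / (X - lam * Phitk1)) = 1)
    (hE : ((γ * Xp + η * X) / (Xp + ε * X)) *
          ((X - lam * Phitk1) / (lam * X - γ * Phitk1)) *
          ((ε * lam * X + Psik1) / (η * X + lam * Psik1)) = 1)
    (hSE : ((β * Xu - ε * X) / (δ * Xu - η * X)) *
           ((η * X + lam * Psik1) / (ε * lam * X + Psik1)) *
           ((lam * X + δ * Phik1) / (X + β * lam * Phik1)) = 1)
    (hS : ((γ * X + δ * Xd) / (X + β * Xd)) *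
          ((X + β * lam * Phik1) / (lam * X + δ * Phik1)) *
          ((lam * X - Psik) / (γ * X - lam * Psik)) = 1)
    (hW : ((X + ε * Xm) / (γ * X + η * Xm)) *
          ((γ * X - lam * Psik) / (lam * X - Psik)) *
          ((lam * X + η * Phitk) / (X + ε * lam * Phitk)) = 1)
    (hNW : ((δ * X - η * Xv) / (β * X - ε * Xv)) *
           ((X + ε * lam * Phitk) / (lam * X + η * Phitk)) *
           ((β * lam * X + Psitk) / (δ * X + lam * Psitk)) = 1) :
    ((Xt / X + β) / (γ * (Xt / X) + δ)) *
    ((γ * (X / Xd) + δ) / (X / Xd + β)) *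
    ((γ * (Xp / X) + η) / (Xp / X + ε)) *
    ((X / Xm + ε) / (γ * (X / Xm) + η)) *
    ((β * (Xu / X) - ε) / (δ * (Xu / X) - η)) *
    ((δ * (X / Xv) - η) / (β * (X / Xv) - ε)) = 1 := by
  have t1 : ((δ * X + lam * Psitk) / (β * lam * X + Psitk)) *
      ((β * lam * X + Psitk) / (δ * X + lam * Psitk)) = 1 := by
    rw [div_mul_div_comm, mul_comm, div_self (mul_ne_zero d2 d18)]
  have t2 : ((lam * X - γ * Phitk1) / (X - lam * Phitk1)) *
      ((X - lam * Phitk1) / (lam * X - γ * Phitk1)) = 1 := by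
    rw [div_mul_div_comm, mul_comm, div_self (mul_ne_zero d3 d5)]
  have t3 : ((ε * lam * X + Psik1) / (η * X + lam * Psik1)) *
      ((η * X + lam * Psik1) / (ε * lam * X + Psik1)) = 1 := by
    rw [div_mul_div_comm, mul_comm, div_self (mul_ne_zero d6 d8)]
  have t4 : ((lam * X + δ * Phik1) / (X + β * lam * Phik1)) *
      ((X + β * lam * Phik1) / (lam * X + δ * Phik1)) = 1 := by
    rw [div_mul_div_comm, mul_comm, div_self (mul_ne_zero d9 d11)]
  have t5 : ((lam * X - Psik) / (γ * X - lam * Psik)) *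
      ((γ * X - lam * Psik) / (lam * X - Psik)) = 1 := by
    rw [div_mul_div_comm, mul_comm, div_self (mul_ne_zero d12 d14)]
  have t6 : ((lam * X + η * Phitk) / (X + ε * lam * Phitk)) *
      ((X + ε * lam * Phitk) / (lam * X + η * Phitk)) = 1 := by
    rw [div_mul_div_comm, mul_comm, div_self (mul_ne_zero d15 d17)]
  have key := telescope6 hN hE hSE hS hW hNW t1 t2 t3 t4 t5 t6
  have g1 : (Xt / X + β) / (γ * (Xt / X) + δ) = (Xt + β * X) / (γ * Xt + δ * X) := by
    rw [div_eq_div_iff _ d1]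
    · field_simp; try ring
    · have h : γ * (Xt / X) + δ = (γ * Xt + δ * X) / X := by field_simp; try ring
      rw [h]; exact div_ne_zero d1 hX
  have g2 : (γ * (X / Xd) + δ) / (X / Xd + β) = (γ * X + δ * Xd) / (X + β * Xd) := by
    rw [div_eq_div_iff _ d10]
    · field_simp; try ring
    · have h : X / Xd + β = (X + β * Xd) / Xd := by field_simp; try ring
      rw [h]; exact div_ne_zero d10 hXd
  have g3 : (γ * (Xp / X) + η) / (Xp / X + ε) = (γ * Xp + η * X) / (Xp + ε * X) := by
    rw [div_eq_div_iff _ d4]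
    · field_simp; try ring
    · have h : Xp / X + ε = (Xp + ε * X) / X := by field_simp; try ring
      rw [h]; exact div_ne_zero d4 hX
  have g4 : (X / Xm + ε) / (γ * (X / Xm) + η) = (X + ε * Xm) / (γ * X + η * Xm) := by
    rw [div_eq_div_iff _ d13]
    · field_simp; try ring
    · have h : γ * (X / Xm) + η = (γ * X + η * Xm) / Xm := by field_simp; try ring
      rw [h]; exact div_ne_zero d13 hXm
  have g5 : (β * (Xu / X) - ε) / (δ * (Xu / X) - η) = (β * Xu - ε * X) / (δ * Xu - η * X) := by
    rw [div_eq_div_iff _ d7]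
    · field_simp; try ring
    · have h : δ * (Xu / X) - η = (δ * Xu - η * X) / X := by field_simp; try ring
      rw [h]; exact div_ne_zero d7 hX
  have g6 : (δ * (X / Xv) - η) / (β * (X / Xv) - ε) = (δ * X - η * Xv) / (β * X - ε * Xv) := by
    rw [div_eq_div_iff _ d16]
    · field_simp; try ring
    · have h : β * (X / Xv) - ε = (β * X - ε * Xv) / Xv := by field_simp; try ring
      rw [h]; exact div_ne_zero d16 hXv
  rw [g1, g2, g3, g4, g5, g6]
  set A := (Xt + β * X) / (γ * Xt + δ * X) with hA
  set B := (γ * Xp + η * X) / (Xp + ε * X) with hB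
  set C := (β * Xu - ε * X) / (δ * Xu - η * X) with hC
  set D := (γ * X + δ * Xd) / (X + β * Xd) with hD
  set E := (X + ε * Xm) / (γ * X + η * Xm) with hE'
  set F := (δ * X - η * Xv) / (β * X - ε * Xv) with hF
  linear_combination key
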